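/- Let q = 2^l and m a positive integer. For u, v in F_{q^m}, let N(u,v) = #{y ∈ F_{q^m} : Tr_{q^m/q}(y² + uy + v) = 0}. Then N(u,v) = 2q^{m-1} if u ∈ F_q^* and Tr_{q^m/2}(v/u²) = 0; N(u,v) = 0 if u ∈ F_q^* and Tr_{q^m/2}(v/u²) = 1; and N(u,v) = q^{m-1} if u ∉ F_q^*. -/

import Mathlib

open scoped Classical
open Finset

section Helpers

lemma card_filter_eq' {α : Type*} [Fintype α] (p q : α → Prop)
    {_h1 : DecidablePred p} {_h2 : DecidablePred q} (h : ∀ x, p x ↔ q x) :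
    (univ.filter p).card = (univ.filter q).card := by
  congr 1
  exact Finset.filter_congr fun x _ => h x

lemma fiber_eq_ker_card {A B : Type*} [AddCommGroup A] [Fintype A]
    [AddCommGroup B] (f : A →+ B) (a₀ : A) :
    (univ.filter fun a => f a = f a₀).card = (univ.filter fun a => f a = 0).card := by
  apply Finset.card_bij' (fun a _ => a - a₀) (fun a _ => a + a₀)
  · intro a ha
    simp only [mem_filter, mem_univ, true_and] at ha ⊢
    simp [map_sub, ha]
  · intro a ha
    simp only [mem_filter, mem_univ, true_and] at ha ⊢
    simp [map_add, ha]
  · intro a _; abel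
  · intro a _; abel

lemma card_fiber_mul_card {A B : Type*} [AddCommGroup A] [Fintype A]
    [AddCommGroup B] [Fintype B]
    (f : A →+ B) (hf : Function.Surjective f) (b : B) :
    (univ.filter fun a => f a = b).card * Fintype.card B = Fintype.card A := by
  obtain ⟨a₀, rfl⟩ := hf b
  have key : ∀ b' : B, (univ.filter fun a => f a = b').card
      = (univ.filter fun a => f a = f a₀).card := by
    intro b'
    obtain ⟨a₁, rfl⟩ := hf b'
    rw [fiber_eq_ker_card f a₁, fiber_eq_ker_card f a₀]
  have h2 := Finset.card_eq_sum_card_fiberwise (f := f) (s := univ) (t := univ)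
    (fun x _ => mem_univ _)
  calc (univ.filter fun a => f a = f a₀).card * Fintype.card B
      = ∑ b' : B, (univ.filter fun a => f a = b').card := by
        rw [Finset.sum_congr rfl fun b' _ => key b']
        simp [mul_comm]
    _ = Fintype.card A := by rw [Fintype.card, h2]

lemma sq_inj {R : Type*} [CommRing R] [IsDomain R] [CharP R 2] :
    Function.Injective (fun a : R => a ^ 2) := by
  intro a b h
  simp only at h
  have h2 : (a + b) ^ 2 = 0 := by rw [CharTwo.add_sq, h, CharTwo.add_self_eq_zero]
  have h3 : a + b = 0 := by
    exact pow_eq_zero_iff (two_ne_zero) |>.mp h2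
  have h4 := add_eq_zero_iff_eq_neg.mp h3
  rwa [CharTwo.neg_eq] at h4

lemma sq_surj {R : Type*} [CommRing R] [IsDomain R] [CharP R 2] [Finite R] :
    Function.Surjective (fun a : R => a ^ 2) :=
  (Finite.injective_iff_bijective.mp sq_inj).2

end Helpers

section ArtinSchreier

variable {E : Type*} [Field E] [Fintype E] [Algebra (ZMod 2) E]

omit [Fintype E] in
lemma charE : CharP E 2 :=
  charP_of_injective_algebraMap (algebraMap (ZMod 2) E).injective 2

/-- trace to `ZMod 2` is invariant under squaring -/
lemma tr2_sq (x : E) :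
    Algebra.trace (ZMod 2) E (x ^ 2) = Algebra.trace (ZMod 2) E x := by
  haveI := charE (E := E)
  haveI : ExpChar E 2 := ExpChar.prime Nat.prime_two
  have hbij : Function.Bijective (frobenius E 2) :=
    (Finite.injective_iff_bijective).mp (frobenius E 2).injective
  let e : E ≃+* E := RingEquiv.ofBijective (frobenius E 2) hbij
  let fr : E ≃ₐ[ZMod 2] E := AlgEquiv.ofRingEquiv (f := e)
    (fun x => by
      have h : (algebraMap (ZMod 2) E).comp (frobenius (ZMod 2) 2) = algebraMap (ZMod 2) E :=
        RingHom.ext_zmod _ _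
      calc e (algebraMap (ZMod 2) E x) = frobenius E 2 (algebraMap (ZMod 2) E x) := rfl
        _ = algebraMap (ZMod 2) E (frobenius (ZMod 2) 2 x) := (RingHom.map_frobenius _ 2 x).symm
        _ = algebraMap (ZMod 2) E x := by rw [← RingHom.comp_apply, h])
  have h := Algebra.trace_eq_of_algEquiv fr x
  have hx : fr x = x ^ 2 := by
    show frobenius E 2 x = x ^ 2
    rw [frobenius_def]
  rw [hx] at h
  exact h

lemma tr2_AS (x : E) :
    Algebra.trace (ZMod 2) E (x ^ 2 + x) = 0 := by
  rw [map_add, tr2_sq]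
  exact CharTwo.add_self_eq_zero _

/-- the Artin–Schreier map as an additive hom -/
noncomputable def ASmap (E : Type*) [Field E] [Algebra (ZMod 2) E] : E →+ E where
  toFun x := x ^ 2 + x
  map_zero' := by simp
  map_add' a b := by
    haveI : CharP E 2 := charE
    show (a + b) ^ 2 + (a + b) = (a ^ 2 + a) + (b ^ 2 + b)
    rw [CharTwo.add_sq]; ring

omit [Fintype E] in
@[simp] lemma ASmap_apply (x : E) : ASmap E x = x ^ 2 + x := rfl

lemma AS_ker_card : (univ.filter fun x : E => x ^ 2 + x = 0).card = 2 := by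
  haveI := charE (E := E)
  have h : (univ.filter fun x : E => x ^ 2 + x = 0) = {0, 1} := by
    ext x
    simp only [mem_filter, mem_univ, true_and, mem_insert, mem_singleton]
    constructor
    · intro h
      have h2 : x * (x + 1) = 0 := by ring_nf; linear_combination h
      rcases mul_eq_zero.mp h2 with h' | h'
      · exact Or.inl h'
      · right
        have hx : x = -1 := by linear_combination h'
        rw [hx, CharTwo.neg_eq]
    · rintro (rfl | rfl) <;> simp [CharTwo.add_self_eq_zero]
  rw [h]
  rw [Finset.card_insert_of_notMem (by simp), Finset.card_singleton]

lemma tr2_surj : Function.Surjective (Algebra.trace (ZMod 2) E) := by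
  haveI : Algebra.IsAlgebraic (ZMod 2) E := Algebra.IsAlgebraic.of_finite _ _
  exact Algebra.trace_surjective _ _

lemma AS_surj_onto_ker (w : E) (hw : Algebra.trace (ZMod 2) E w = 0) :
    ∃ x : E, x ^ 2 + x = w := by
  set Im : Finset E := univ.image (fun x : E => x ^ 2 + x) with hIm
  set K : Finset E := univ.filter (fun z : E => Algebra.trace (ZMod 2) E z = 0) with hK
  have hsub : Im ⊆ K := by
    intro z hz
    rw [hIm, mem_image] at hz
    obtain ⟨x, _, rfl⟩ := hz
    rw [hK, mem_filter]
    exact ⟨mem_univ _, tr2_AS x⟩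
  have hKcard : K.card * 2 = Fintype.card E := by
    have h := card_fiber_mul_card (Algebra.trace (ZMod 2) E).toAddMonoidHom tr2_surj 0
    rw [ZMod.card] at h
    rw [← h]
    congr 1
    exact card_filter_eq' _ _ (fun x => by simp)
  have hImcard : 2 * Im.card = Fintype.card E := by
    have hfib := Finset.card_eq_sum_card_fiberwise
      (f := fun x : E => x ^ 2 + x) (s := univ) (t := Im)
      (fun x _ => mem_image_of_mem _ (mem_univ x))
    have heach : ∀ z ∈ Im, (univ.filter fun x : E => x ^ 2 + x = z).card = 2 := by
      intro z hz
      rw [hIm, mem_image] at hz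
      obtain ⟨x₀, _, rfl⟩ := hz
      have h1 : (univ.filter fun x : E => x ^ 2 + x = x₀ ^ 2 + x₀).card
          = (univ.filter fun x : E => ASmap E x = ASmap E x₀).card :=
        card_filter_eq' _ _ (fun x => by simp)
      have h2 : (univ.filter fun x : E => ASmap E x = 0).card
          = (univ.filter fun x : E => x ^ 2 + x = 0).card :=
        card_filter_eq' _ _ (fun x => by simp)
      rw [h1, fiber_eq_ker_card, h2, AS_ker_card]
    rw [Finset.sum_congr rfl heach] at hfib
    simp only [Finset.sum_const, smul_eq_mul] at hfib
    rw [← Finset.card_univ, hfib, mul_comm]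
  have hcards : K.card = Im.card := by omega
  have hKI : K = Im := (Finset.eq_of_subset_of_card_le hsub (le_of_eq hcards)).symm
  have hwK : w ∈ K := by rw [hK, mem_filter]; exact ⟨mem_univ _, hw⟩
  rw [hKI, hIm, mem_image] at hwK
  obtain ⟨x, _, hx⟩ := hwK
  exact ⟨x, hx⟩

lemma AS_fiber (w : E) :
    (univ.filter fun x : E => x ^ 2 + x = w).card
      = if Algebra.trace (ZMod 2) E w = 0 then 2 else 0 := by
  by_cases hw : ∃ x : E, x ^ 2 + x = w
  · obtain ⟨x₀, hx₀⟩ := hw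
    rw [if_pos (hx₀ ▸ tr2_AS x₀)]
    have h1 : (univ.filter fun x : E => x ^ 2 + x = w).card
        = (univ.filter fun x : E => ASmap E x = ASmap E x₀).card :=
      card_filter_eq' _ _ (fun x => by simp [hx₀])
    have h2 : (univ.filter fun x : E => ASmap E x = 0).card
        = (univ.filter fun x : E => x ^ 2 + x = 0).card :=
      card_filter_eq' _ _ (fun x => by simp)
    rw [h1, fiber_eq_ker_card, h2, AS_ker_card]
  · rw [if_neg, Finset.card_eq_zero.mpr]
    · rw [Finset.filter_eq_empty_iff]
      intro x _ hx
      exact hw ⟨x, hx⟩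
    · intro h
      exact hw (AS_surj_onto_ker w h)

end ArtinSchreier

section KeyCount

lemma key_count {F E : Type*} [Field F] [Fintype F] [Field E] [Fintype E]
    [Algebra F E] [Algebra (ZMod 2) E] (u v : E) (hu : u ≠ 0) :
    (univ.filter (fun y : E => Algebra.trace F E (y ^ 2 + u * y + v) = 0)).card
      = 2 * (univ.filter (fun w : E =>
          Algebra.trace F E (u ^ 2 * w + v) = 0 ∧ Algebra.trace (ZMod 2) E w = 0)).card := by
  have b1 : (univ.filter (fun y : E => Algebra.trace F E (y ^ 2 + u * y + v) = 0)).card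
      = (univ.filter (fun x : E => Algebra.trace F E (u ^ 2 * (x ^ 2 + x) + v) = 0)).card := by
    apply Finset.card_bij' (fun y _ => y / u) (fun x _ => u * x)
    · intro y hy
      simp only [mem_filter, mem_univ, true_and] at hy ⊢
      have h : u ^ 2 * ((y / u) ^ 2 + y / u) + v = y ^ 2 + u * y + v := by
        field_simp
      rw [h]; exact hy
    · intro x hx
      simp only [mem_filter, mem_univ, true_and] at hx ⊢
      have h : (u * x) ^ 2 + u * (u * x) + v = u ^ 2 * (x ^ 2 + x) + v := by ring
      rw [h]; exact hx
    · intro y _; field_simp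
    · intro x _; field_simp
  have b2 := Finset.card_eq_sum_card_fiberwise
    (f := fun x : E => x ^ 2 + x)
    (s := univ.filter (fun x : E => Algebra.trace F E (u ^ 2 * (x ^ 2 + x) + v) = 0))
    (t := univ) (fun x _ => mem_univ _)
  have b3 : ∀ w : E,
      ((univ.filter (fun x : E => Algebra.trace F E (u ^ 2 * (x ^ 2 + x) + v) = 0)).filter
        (fun x => x ^ 2 + x = w)).card
      = if Algebra.trace F E (u ^ 2 * w + v) = 0 ∧ Algebra.trace (ZMod 2) E w = 0
          then 2 else 0 := by
    intro w
    rw [Finset.filter_filter]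
    by_cases hc : Algebra.trace F E (u ^ 2 * w + v) = 0
    · have e1 : ((univ.filter fun x : E =>
            Algebra.trace F E (u ^ 2 * (x ^ 2 + x) + v) = 0 ∧ x ^ 2 + x = w)).card
          = (univ.filter fun x : E => x ^ 2 + x = w).card := by
        apply card_filter_eq'
        intro x
        constructor
        · exact fun h => h.2
        · intro h; exact ⟨by rw [h]; exact hc, h⟩
      rw [e1, AS_fiber]
      by_cases h2 : Algebra.trace (ZMod 2) E w = 0 <;> simp [hc, h2]
    · have e1 : (univ.filter fun x : E =>
            Algebra.trace F E (u ^ 2 * (x ^ 2 + x) + v) = 0 ∧ x ^ 2 + x = w) = ∅ := by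
        rw [Finset.filter_eq_empty_iff]
        rintro x _ ⟨h1, h2⟩
        exact hc (by rw [← h2]; exact h1)
      rw [e1, Finset.card_empty, if_neg]
      rintro ⟨h1, _⟩
      exact hc h1
  rw [b1, b2, Finset.sum_congr rfl (fun w _ => b3 w)]
  rw [Finset.sum_ite, Finset.sum_const, Finset.sum_const_zero, add_zero, smul_eq_mul, mul_comm]

end KeyCount

/-- `q = 2^l`, `N(u,v) = #{y ∈ F_{q^m} : Tr_{q^m/q}(y² + uy + v) = 0}`.
If `u ∈ F_q^*` then `N = 2q^{m-1}` or `0` according to whether `Tr_{q^m/2}(v/u²)` is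
`0` or `1`; if `u ∉ F_q^*` then `N = q^{m-1}`. -/
theorem stmt5 {F E : Type*} [Field F] [Fintype F] [Field E] [Fintype E]
    [Algebra F E] [Algebra (ZMod 2) E]
    (l m : ℕ) (hl : 0 < l) (hm : 0 < m)
    (hF : Fintype.card F = 2 ^ l) (hE : Fintype.card E = Fintype.card F ^ m)
    (u v : E) :
    ((∃ u₀ : F, u₀ ≠ 0 ∧ algebraMap F E u₀ = u) →
      (Algebra.trace (ZMod 2) E (v / u ^ 2) = 0 →
        (univ.filter (fun y : E =>
          Algebra.trace F E (y ^ 2 + u * y + v) = 0)).card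
          = 2 * Fintype.card F ^ (m - 1)) ∧
      (Algebra.trace (ZMod 2) E (v / u ^ 2) = 1 →
        (univ.filter (fun y : E =>
          Algebra.trace F E (y ^ 2 + u * y + v) = 0)).card = 0)) ∧
    ((¬ ∃ u₀ : F, u₀ ≠ 0 ∧ algebraMap F E u₀ = u) →
      (univ.filter (fun y : E =>
        Algebra.trace F E (y ^ 2 + u * y + v) = 0)).card
        = Fintype.card F ^ (m - 1)) := by
  haveI charE' : CharP E 2 := charE
  haveI charF' : CharP F 2 := (algebraMap F E).charP (algebraMap F E).injective 2
  letI : Algebra (ZMod 2) F := ZMod.algebra F 2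
  haveI : IsScalarTower (ZMod 2) F E := IsScalarTower.of_algebraMap_eq' (RingHom.ext_zmod _ _)
  haveI : Algebra.IsAlgebraic F E := Algebra.IsAlgebraic.of_finite _ _
  have trsurj : Function.Surjective (Algebra.trace F E) := Algebra.trace_surjective F E
  have hq : 0 < Fintype.card F := Fintype.card_pos
  have hqpow : Fintype.card E = Fintype.card F ^ (m - 1) * Fintype.card F := by
    rw [hE, ← pow_succ, Nat.sub_add_cancel hm]
  have hTrFiber : ∀ c : F, (univ.filter fun z : E => Algebra.trace F E z = c).card
      = Fintype.card F ^ (m - 1) := by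
    intro c
    have h := card_fiber_mul_card (Algebra.trace F E).toAddMonoidHom trsurj c
    rw [hqpow] at h
    have h2 := Nat.eq_of_mul_eq_mul_right hq h
    rw [← h2]
    exact card_filter_eq' _ _ (fun x => by simp)
  have tr2_tower : ∀ z : E, Algebra.trace (ZMod 2) E z
      = Algebra.trace (ZMod 2) F (Algebra.trace F E z) := by
    intro z
    rw [Algebra.trace_trace]
  constructor
  · rintro ⟨u₀, hu₀, hu⟩
    have hune : u ≠ 0 := by
      intro h
      exact hu₀ ((algebraMap F E).injective (by rw [hu, h, map_zero]))
    have hu₀2 : (u₀ : F) ^ 2 ≠ 0 := pow_ne_zero 2 hu₀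
    set c₀ : F := Algebra.trace F E v / u₀ ^ 2 with hc₀
    -- hypothesis reformulation
    have hv2 : v / u ^ 2 = (u₀ ^ 2)⁻¹ • v := by
      rw [← hu, ← map_pow, Algebra.smul_def, map_inv₀, div_eq_mul_inv, mul_comm]
    have hvtr : Algebra.trace (ZMod 2) E (v / u ^ 2) = Algebra.trace (ZMod 2) F c₀ := by
      rw [tr2_tower, hv2, map_smul, smul_eq_mul, hc₀, div_eq_inv_mul]
    -- condition reformulation
    have hcond : ∀ w : E,
        (Algebra.trace F E (u ^ 2 * w + v) = 0 ∧ Algebra.trace (ZMod 2) E w = 0)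
          ↔ (Algebra.trace F E w = c₀ ∧
              Algebra.trace (ZMod 2) F (Algebra.trace F E w) = 0) := by
      intro w
      have h1 : Algebra.trace F E (u ^ 2 * w) = u₀ ^ 2 * Algebra.trace F E w := by
        rw [← hu, ← map_pow, ← Algebra.smul_def, map_smul, smul_eq_mul]
      have h2 : Algebra.trace F E (u ^ 2 * w + v) = 0
          ↔ Algebra.trace F E w = c₀ := by
        rw [map_add, h1, add_eq_zero_iff_eq_neg, CharTwo.neg_eq, hc₀,
          eq_div_iff hu₀2, mul_comm]
      rw [h2, tr2_tower]
    rw [key_count u v hune]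
    constructor
    · intro h0
      rw [hvtr] at h0
      have e1 : (univ.filter (fun w : E =>
          Algebra.trace F E (u ^ 2 * w + v) = 0 ∧ Algebra.trace (ZMod 2) E w = 0)).card
          = (univ.filter fun z : E => Algebra.trace F E z = c₀).card := by
        apply card_filter_eq'
        intro w
        rw [hcond w]
        constructor
        · exact fun h => h.1
        · intro h; exact ⟨h, by rw [h]; exact h0⟩
      rw [e1, hTrFiber]
    · intro h1
      rw [hvtr] at h1
      have e1 : (univ.filter (fun w : E =>
          Algebra.trace F E (u ^ 2 * w + v) = 0 ∧ Algebra.trace (ZMod 2) E w = 0)) = ∅ := by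
        rw [Finset.filter_eq_empty_iff]
        intro w _ hw
        have h := (hcond w).mp hw
        rw [h.1, h1] at h
        exact one_ne_zero h.2
      rw [e1, Finset.card_empty, mul_zero]
  · intro hcase
    by_cases hu0 : u = 0
    · subst hu0
      have e0 : (univ.filter (fun y : E =>
          Algebra.trace F E (y ^ 2 + 0 * y + v) = 0)).card
          = (univ.filter (fun y : E => Algebra.trace F E (y ^ 2 + v) = 0)).card :=
        card_filter_eq' _ _ (fun y => by rw [zero_mul, add_zero])
      have e1 : (univ.filter (fun y : E => Algebra.trace F E (y ^ 2 + v) = 0)).card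
          = (univ.filter (fun z : E => Algebra.trace F E (z + v) = 0)).card := by
        apply Finset.card_bij (fun y _ => y ^ 2)
        · intro y hy
          simp only [mem_filter, mem_univ, true_and] at hy ⊢
          exact hy
        · intro a ha b hb h
          exact sq_inj h
        · intro z hz
          simp only [mem_filter, mem_univ, true_and] at hz
          obtain ⟨y, hy⟩ := sq_surj (R := E) z
          have hy' : y ^ 2 = z := hy
          exact ⟨y, by simp only [mem_filter, mem_univ, true_and]; rw [hy']; exact hz, hy⟩
      have e2 : (univ.filter (fun z : E => Algebra.trace F E (z + v) = 0)).card
          = (univ.filter (fun z : E => Algebra.trace F E z = Algebra.trace F E v)).card :=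
        card_filter_eq' _ _ (fun z => by
          rw [map_add, add_eq_zero_iff_eq_neg, CharTwo.neg_eq])
      rw [e0, e1, e2, hTrFiber]
    · -- u ≠ 0, u not in F
      have hnotin : ∀ t : F, algebraMap F E t ≠ u := by
        intro t ht
        rcases eq_or_ne t 0 with rfl | h
        · rw [map_zero] at ht; exact hu0 ht.symm
        · exact hcase ⟨t, h, ht⟩
      have hTu : ∀ c : F, ∃ w : E, Algebra.trace F E (u ^ 2 * w) = c := by
        intro c
        obtain ⟨z, hz⟩ := trsurj c
        exact ⟨(u ^ 2)⁻¹ * z, by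
          rw [← mul_assoc, mul_inv_cancel₀ (pow_ne_zero 2 hu0), one_mul, hz]⟩
      -- nontriviality
      have hw1 : ∃ w₁ : E, Algebra.trace F E (u ^ 2 * w₁) = 0
          ∧ Algebra.trace (ZMod 2) E w₁ = 1 := by
        by_contra hcon
        push_neg at hcon
        have hcon' : ∀ w : E, Algebra.trace F E (u ^ 2 * w) = 0 →
            Algebra.trace (ZMod 2) E w = 0 := by
          intro w h
          exact (by decide : ∀ a : ZMod 2, a ≠ 1 → a = 0) _ (hcon w h)
        obtain ⟨e', he'⟩ := hTu 1
        have keyz : ∀ z : E, Algebra.trace (ZMod 2) E z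
            = Algebra.trace (ZMod 2) E
                (algebraMap F E (Algebra.trace F E (u ^ 2 * z)) * e') := by
          intro z
          have h1 : Algebra.trace F E
              (u ^ 2 * (z + algebraMap F E (Algebra.trace F E (u ^ 2 * z)) * e')) = 0 := by
            rw [mul_add, map_add]
            have h2 : u ^ 2 * (algebraMap F E (Algebra.trace F E (u ^ 2 * z)) * e')
                = algebraMap F E (Algebra.trace F E (u ^ 2 * z)) * (u ^ 2 * e') := by ring
            rw [h2, ← Algebra.smul_def, map_smul, he', smul_eq_mul, mul_one]
            exact CharTwo.add_self_eq_zero _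
          have h3 := hcon' _ h1
          rw [map_add] at h3
          have h4 := add_eq_zero_iff_eq_neg.mp h3
          rwa [CharTwo.neg_eq] at h4
        have keyz2 : ∀ z : E, Algebra.trace (ZMod 2) E z
            = Algebra.trace (ZMod 2) E
                (algebraMap F E (Algebra.trace F E e') * u ^ 2 * z) := by
          intro z
          rw [keyz z, tr2_tower, tr2_tower]
          congr 1
          rw [← Algebra.smul_def, map_smul, smul_eq_mul]
          have h5 : algebraMap F E (Algebra.trace F E e') * u ^ 2 * z
              = algebraMap F E (Algebra.trace F E e') * (u ^ 2 * z) := by ring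
          rw [h5, ← Algebra.smul_def, map_smul, smul_eq_mul, mul_comm]
        have keyz3 : ∀ z : E, Algebra.traceForm (ZMod 2) E
            (1 + algebraMap F E (Algebra.trace F E e') * u ^ 2) z = 0 := by
          intro z
          rw [Algebra.traceForm_apply, add_mul, one_mul, map_add, ← keyz2 z]
          exact CharTwo.add_self_eq_zero _
        haveI : Algebra.IsAlgebraic (ZMod 2) E := Algebra.IsAlgebraic.of_finite _ _
        have nd := traceForm_nondegenerate (ZMod 2) E
        have h0 : (1 : E) + algebraMap F E (Algebra.trace F E e') * u ^ 2 = 0 := nd.1 _ keyz3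
        have h4 : algebraMap F E (Algebra.trace F E e') * u ^ 2 = 1 := by
          have h5 := add_eq_zero_iff_eq_neg.mp h0
          rw [CharTwo.neg_eq] at h5
          exact h5.symm
        set b := Algebra.trace F E e' with hb
        have hbne : b ≠ 0 := by
          intro h
          rw [h, map_zero, zero_mul] at h4
          exact one_ne_zero h4.symm
        have hu2 : u ^ 2 = algebraMap F E b⁻¹ := by
          rw [map_inv₀]
          exact eq_inv_of_mul_eq_one_right h4
        obtain ⟨d, hd⟩ := sq_surj (R := F) b⁻¹
        simp only at hd
        have hud : u = algebraMap F E d := by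
          apply sq_inj (R := E)
          show u ^ 2 = (algebraMap F E d) ^ 2
          rw [hu2, ← hd, map_pow]
        exact hnotin d hud.symm
      obtain ⟨w₁, hw₁a, hw₁b⟩ := hw1
      -- the combined map
      set Φ : E →+ F × ZMod 2 :=
        { toFun := fun w => (Algebra.trace F E (u ^ 2 * w), Algebra.trace (ZMod 2) E w)
          map_zero' := by simp
          map_add' := fun a b => by
            simp only [mul_add, map_add, Prod.mk_add_mk] } with hΦ
      have surjΦ : Function.Surjective Φ := by
        rintro ⟨c, ε⟩
        obtain ⟨w, hw⟩ := hTu c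
        by_cases hε : Algebra.trace (ZMod 2) E w = ε
        · exact ⟨w, by simp only [hΦ, AddMonoidHom.coe_mk, ZeroHom.coe_mk, hw, hε]⟩
        · refine ⟨w + w₁, ?_⟩
          simp only [hΦ, AddMonoidHom.coe_mk, ZeroHom.coe_mk, mul_add, map_add, hw, hw₁a,
            add_zero, hw₁b]
          have : Algebra.trace (ZMod 2) E w + 1 = ε :=
            (by decide : ∀ a b : ZMod 2, a ≠ b → a + 1 = b) _ _ hε
          rw [Prod.mk_add_mk, add_zero, this]
      have h0 := card_fiber_mul_card Φ surjΦ (Algebra.trace F E v, 0)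
      rw [Fintype.card_prod, ZMod.card] at h0
      have h : (univ.filter (fun a : E => Φ a = (Algebra.trace F E v, 0))).card
          * (Fintype.card F * 2) = Fintype.card E := by
        rw [← h0]
        congr 1
        exact card_filter_eq' _ _ (fun x => Iff.rfl)
      -- bridge the filters
      rw [key_count u v hu0]
      have e1 : (univ.filter (fun w : E =>
          Algebra.trace F E (u ^ 2 * w + v) = 0 ∧ Algebra.trace (ZMod 2) E w = 0)).card
          = (univ.filter (fun a : E => Φ a = (Algebra.trace F E v, 0))).card := by
        apply card_filter_eq'
        intro w
        rw [hΦ]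
        simp only [AddMonoidHom.coe_mk, ZeroHom.coe_mk, Prod.mk.injEq]
        rw [map_add, add_eq_zero_iff_eq_neg, CharTwo.neg_eq]
      rw [e1]
      -- arithmetic
      have harith : (2 * (univ.filter (fun a : E => Φ a = (Algebra.trace F E v, 0))).card)
          * Fintype.card F = Fintype.card F ^ (m - 1) * Fintype.card F := by
        rw [← hqpow, ← h]
        ring
      exact Nat.eq_of_mul_eq_mul_right hq harith
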